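/- Let K ⊆ ℝ² be a compact convex set with nonempty interior, let q ≥ 2 be an integer, and let p : ℤ/qℤ → K be a q-tuple of points maximizing the cyclic perimeter P(p) := ∑_{i ∈ ℤ/qℤ} ‖p(i+1) − p(i)‖ over all functions ℤ/qℤ → K. Then for every i ∈ ℤ/qℤ, the point p(i) lies on the topological boundary of K, and p(i+1) ≠ p(i). -/

import Mathlib

open scoped RealInnerProductSpace

/-- In the Euclidean plane, for any vector `w` and any `r > 0` there is a vector of norm `r`
orthogonal to `w`. -/
lemma exists_perp_vec (w : EuclideanSpace ℝ (Fin 2)) {r : ℝ} (hr : 0 < r) :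
    ∃ d : EuclideanSpace ℝ (Fin 2), ‖d‖ = r ∧ ⟪w, d⟫ = 0 := by
  obtain ⟨d₀, hd₀, hperp⟩ : ∃ d₀ : EuclideanSpace ℝ (Fin 2), d₀ ≠ 0 ∧ ⟪w, d₀⟫ = 0 := by
    by_cases hw : w = 0
    · refine ⟨(WithLp.equiv 2 (Fin 2 → ℝ)).symm ![1, 0], ?_, by simp [hw]⟩
      intro h
      have h0 := congrArg (fun v => v 0) h
      simp [WithLp.equiv_symm_apply, PiLp.toLp_apply] at h0
    · refine ⟨(WithLp.equiv 2 (Fin 2 → ℝ)).symm ![-w 1, w 0], ?_, ?_⟩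
      · intro h
        apply hw
        have h0 := congrArg (fun v => v 0) h
        have h1 := congrArg (fun v => v 1) h
        simp [WithLp.equiv_symm_apply, PiLp.toLp_apply] at h0 h1
        ext j
        fin_cases j
        · simpa using h1
        · simpa using h0
      · simp only [PiLp.inner_apply, RCLike.inner_apply, starRingEnd_apply, star_trivial,
          Fin.sum_univ_two, WithLp.equiv_symm_apply, PiLp.toLp_apply]
        simp
        ring
  have hn : 0 < ‖d₀‖ := norm_pos_iff.mpr hd₀
  refine ⟨(r / ‖d₀‖) • d₀, ?_, ?_⟩
  · rw [norm_smul, Real.norm_eq_abs, abs_of_pos (div_pos hr hn), div_mul_cancel₀ _ hn.ne']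
  · rw [real_inner_smul_right, hperp, mul_zero]

lemma sum_sub_eq_pair {q : ℕ} [NeZero q] (f g : ZMod q → ℝ) (i j : ZMod q) (hij : i ≠ j)
    (h : ∀ k, k ≠ i → k ≠ j → f k = g k) :
    (∑ k, f k) - (∑ k, g k) = (f i - g i) + (f j - g j) := by
  have h1 : ∑ k, (f k - g k) = ∑ k ∈ ({i, j} : Finset (ZMod q)), (f k - g k) := by
    refine (Finset.sum_subset (Finset.subset_univ _) ?_).symm
    intro k _ hk
    simp only [Finset.mem_insert, Finset.mem_singleton, not_or] at hk
    rw [h k hk.1 hk.2, sub_self]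
  rw [← Finset.sum_sub_distrib, h1, Finset.sum_pair hij]

/-- Any inscribed `q`-gon of maximal cyclic perimeter in a compact convex planar body with
nonempty interior has all its vertices on the boundary, and consecutive vertices distinct. -/
theorem max_perimeter_polygon_on_boundary
    (K : Set (EuclideanSpace ℝ (Fin 2)))
    (hK : IsCompact K) (hconv : Convex ℝ K) (hint : (interior K).Nonempty)
    (q : ℕ) [NeZero q] (hq : 2 ≤ q)
    (p : ZMod q → EuclideanSpace ℝ (Fin 2)) (hp : ∀ i, p i ∈ K)
    (hmax : ∀ p' : ZMod q → EuclideanSpace ℝ (Fin 2), (∀ i, p' i ∈ K) →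
      ∑ i : ZMod q, ‖p' (i + 1) - p' i‖ ≤ ∑ i : ZMod q, ‖p (i + 1) - p i‖) :
    ∀ i : ZMod q, p i ∈ frontier K ∧ p (i + 1) ≠ p i := by
  haveI : Fact (1 < q) := ⟨hq⟩
  have hone : (1 : ZMod q) ≠ 0 := one_ne_zero
  -- key consequence of maximality: moving a single vertex can't increase its two sides.
  have key : ∀ (i : ZMod q) (x : EuclideanSpace ℝ (Fin 2)), x ∈ K →
      ‖x - p (i - 1)‖ + ‖p (i + 1) - x‖ ≤ ‖p i - p (i - 1)‖ + ‖p (i + 1) - p i‖ := by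
    intro i x hx
    set p' := Function.update p i x with hp'def
    have hmem : ∀ j, p' j ∈ K := by
      intro j
      rcases eq_or_ne j i with rfl | hj
      · simpa [hp'def] using hx
      · simpa [hp'def, Function.update_of_ne hj] using hp j
    have hle := hmax p' hmem
    have hii : i - 1 ≠ i := by
      intro h
      exact hone (sub_eq_self.mp h)
    have hi1 : i + 1 ≠ i := by
      intro h
      exact hone (by simpa using congrArg (· - i) h)
    have hsum := sum_sub_eq_pair (fun j => ‖p' (j + 1) - p' j‖) (fun j => ‖p (j + 1) - p j‖)
      (i - 1) i hii ?_
    · have e1 : p' (i - 1 + 1) = x := by rw [sub_add_cancel]; simp [hp'def]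
      have e2 : p' (i - 1) = p (i - 1) := Function.update_of_ne hii _ _
      have e3 : p' (i + 1) = p (i + 1) := Function.update_of_ne hi1 _ _
      have e4 : p' i = x := by simp [hp'def]
      simp only [e1, e2, e3, e4, sub_add_cancel] at hsum
      linarith
    · intro k hk1 hk2
      have hk1' : k + 1 ≠ i := by
        intro h
        exact hk1 (by rw [← h]; ring)
      simp only [hp'def, Function.update_of_ne hk1', Function.update_of_ne hk2]
  intro i
  constructor
  · -- every vertex is on the boundary
    by_contra hfr
    have hint_i : p i ∈ interior K := by
      have : p i ∈ closure K := subset_closure (hp i)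
      rw [frontier, Set.mem_diff] at hfr
      push_neg at hfr
      exact hfr this
    obtain ⟨ε, hε, hball⟩ := Metric.isOpen_iff.mp isOpen_interior (p i) hint_i
    obtain ⟨d, hd, hdw⟩ := exists_perp_vec (p (i + 1) - p i) (half_pos hε)
    have hd0 : (0:ℝ) < ‖d‖ := by rw [hd]; exact half_pos hε
    have hmem : ∀ s : EuclideanSpace ℝ (Fin 2), ‖s‖ = ‖d‖ → p i + s ∈ K := by
      intro s hs
      apply interior_subset
      apply hball
      rw [Metric.mem_ball, dist_eq_norm, add_sub_cancel_left, hs, hd]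
      linarith
    have hA := key i (p i + d) (hmem d rfl)
    have hB := key i (p i - d) (by simpa [sub_eq_add_neg] using hmem (-d) (by simp))
    set w : EuclideanSpace ℝ (Fin 2) := p (i + 1) - p i with hw
    set u : EuclideanSpace ℝ (Fin 2) := p i - p (i - 1) with hu
    have ewA : p (i + 1) - (p i + d) = w - d := by rw [hw]; abel
    have ewB : p (i + 1) - (p i - d) = w + d := by rw [hw]; abel
    have euA : p i + d - p (i - 1) = u + d := by rw [hu]; abel
    have euB : p i - d - p (i - 1) = u - d := by rw [hu]; abel
    rw [ewA, euA] at hA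
    rw [ewB, euB] at hB
    -- Pythagoras: both ‖w - d‖ and ‖w + d‖ exceed ‖w‖
    have hpA : ‖w‖ < ‖w + d‖ := by
      have h1 : ‖w + d‖ ^ 2 = ‖w‖ ^ 2 + 2 * ⟪w, d⟫ + ‖d‖ ^ 2 := norm_add_sq_real w d
      nlinarith [norm_nonneg (w + d), norm_nonneg w]
    have hpB : ‖w‖ < ‖w - d‖ := by
      have h1 : ‖w - d‖ ^ 2 = ‖w‖ ^ 2 - 2 * ⟪w, d⟫ + ‖d‖ ^ 2 := norm_sub_sq_real w d
      nlinarith [norm_nonneg (w - d), norm_nonneg w]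
    -- triangle: ‖u + d‖ + ‖u - d‖ ≥ 2‖u‖
    have htri : 2 * ‖u‖ ≤ ‖u + d‖ + ‖u - d‖ := by
      have h1 : ‖(u + d) + (u - d)‖ ≤ ‖u + d‖ + ‖u - d‖ := norm_add_le _ _
      have h2 : (u + d) + (u - d) = u + u := by abel
      rw [h2] at h1
      have h3 : u + u = (2:ℝ) • u := (two_smul ℝ u).symm
      calc 2 * ‖u‖ = ‖u + u‖ := by rw [h3, norm_smul]; simp
      _ ≤ _ := h1
    linarith
  · -- consecutive vertices are distinct
    intro heq
    obtain ⟨z, hz⟩ := hint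
    obtain ⟨r, hr, hball⟩ := Metric.isOpen_iff.mp isOpen_interior z hz
    obtain ⟨d, hd, hdw⟩ := exists_perp_vec (p i - p (i - 1)) (half_pos hr)
    have hd0 : (0:ℝ) < ‖d‖ := by rw [hd]; exact half_pos hr
    have hmem : ∀ s : EuclideanSpace ℝ (Fin 2), ‖s‖ = ‖d‖ → z + s ∈ K := by
      intro s hs
      apply interior_subset
      apply hball
      rw [Metric.mem_ball, dist_eq_norm, add_sub_cancel_left, hs, hd]
      linarith
    set b : EuclideanSpace ℝ (Fin 2) := p (i - 1) with hb
    set c : EuclideanSpace ℝ (Fin 2) := p i with hc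
    have hA := key i (z + d) (hmem d rfl)
    have hB := key i (z - d) (by simpa [sub_eq_add_neg] using hmem (-d) (by simp))
    rw [heq, ← hc] at hA hB
    simp only [sub_self, norm_zero, add_zero] at hA hB
    -- triangle inequality gives equality, hence both points lie on the segment [b, c]
    have hseg : ∀ y : EuclideanSpace ℝ (Fin 2),
        ‖y - b‖ + ‖c - y‖ ≤ ‖c - b‖ → y ∈ segment ℝ b c := by
      intro y hy
      have htri : ‖c - b‖ ≤ ‖c - y‖ + ‖y - b‖ := by
        have := norm_add_le (c - y) (y - b)
        have h2 : (c - y) + (y - b) = c - b := by abel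
        rwa [h2] at this
      have heq' : dist b y + dist y c = dist b c := by
        rw [dist_eq_norm, dist_eq_norm, dist_eq_norm, norm_sub_rev b y, norm_sub_rev y c, norm_sub_rev b c]
        linarith
      exact mem_segment_iff_wbtw.mpr (dist_add_dist_eq_iff.mp heq')
    have hsA := hseg (z + d) hA
    have hsB := hseg (z - d) hB
    rw [segment_eq_image'] at hsA hsB
    obtain ⟨tA, _, htA⟩ := hsA
    obtain ⟨tB, _, htB⟩ := hsB
    have hdd : d + d = (tA - tB) • (c - b) := by
      calc d + d = (z + d) - (z - d) := by abel
      _ = (b + tA • (c - b)) - (b + tB • (c - b)) := by rw [← htA, ← htB]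
      _ = (tA - tB) • (c - b) := by rw [sub_smul]; abel
    have hinner : ⟪d, d + d⟫ = 0 := by
      rw [hdd, real_inner_smul_right, real_inner_comm, hdw, mul_zero]
    rw [inner_add_right, real_inner_self_eq_norm_sq] at hinner
    nlinarith
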